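/- Let k > 0, C ≥ 0, S ≥ 0, and let b, g : ℕ → ℝ be nonnegative sequences satisfying (1 + k)·b(n) ≤ b(n−1) + k·C·(1 + k)^{−n}·(1 + g(n)) for all n ≥ 1, and k·∑_{m=1}^{n} g(m) ≤ S for all n ≥ 1. Then b(n) ≤ (b(0) + C·k·n + C·S) · (1 + k)^{−n} for all n ≥ 0. -/
import Mathlib


/-- Case `2K_p = 1` (estimate (Newv2)): decay of `b(n)` with rate `kn·(1+k)^{−n}`. -/
theorem stmt_9 (k C S : ℝ) (hk : 0 < k) (hC : 0 ≤ C) (hS : 0 ≤ S)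
    (b g : ℕ → ℝ)
    (hbnn : ∀ n : ℕ, 0 ≤ b n) (hgnn : ∀ n : ℕ, 0 ≤ g n)
    (hrec : ∀ n : ℕ, 1 ≤ n →
      (1 + k) * b n ≤ b (n - 1) + k * C * ((1 + k) ^ n)⁻¹ * (1 + g n))
    (hsum : ∀ n : ℕ, 1 ≤ n → k * ∑ m ∈ Finset.Icc 1 n, g m ≤ S) :
    ∀ n : ℕ, b n ≤ (b 0 + C * k * n + C * S) * ((1 + k) ^ n)⁻¹ := by
  have h1k : (0:ℝ) < 1 + k := by linarith
  have hpow : ∀ n : ℕ, (0:ℝ) < (1 + k) ^ n := fun n => pow_pos h1k n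
  have key : ∀ n : ℕ, (1 + k) ^ n * b n ≤
      b 0 + C * k * n + k * ∑ m ∈ Finset.Icc 1 n, C * g m := by
    intro n
    induction n with
    | zero => simp
    | succ n ih =>
      have hr := hrec (n + 1) (Nat.le_add_left 1 n)
      simp only [Nat.add_sub_cancel] at hr
      have hmul := mul_le_mul_of_nonneg_left hr (le_of_lt (hpow n))
      have heq1 : (1 + k) ^ n * ((1 + k) * b (n + 1)) = (1 + k) ^ (n + 1) * b (n + 1) := by
        ring
      have hterm : (1 + k) ^ n * (k * C * ((1 + k) ^ (n + 1))⁻¹ * (1 + g (n + 1)))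
          ≤ k * C * (1 + g (n + 1)) := by
        have h1 : (1 + k) ^ n * ((1 + k) ^ (n + 1))⁻¹ = (1 + k)⁻¹ := by
          rw [pow_succ, mul_inv]
          field_simp
        have h2 : (1 + k)⁻¹ ≤ 1 := by
          rw [inv_le_one_iff₀]; right; linarith
        have h3 : 0 ≤ 1 + g (n + 1) := by have := hgnn (n + 1); linarith
        calc (1 + k) ^ n * (k * C * ((1 + k) ^ (n + 1))⁻¹ * (1 + g (n + 1)))
            = (1 + k)⁻¹ * (k * C * (1 + g (n + 1))) := by
              rw [← h1]; ring
          _ ≤ 1 * (k * C * (1 + g (n + 1))) := by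
              apply mul_le_mul_of_nonneg_right h2
              positivity
          _ = k * C * (1 + g (n + 1)) := by ring
      rw [Finset.sum_Icc_succ_top (Nat.le_add_left 1 n)]
      have : (1 + k) ^ (n + 1) * b (n + 1) ≤
          (1 + k) ^ n * b n + k * C * (1 + g (n + 1)) := by
        calc (1 + k) ^ (n + 1) * b (n + 1)
            = (1 + k) ^ n * ((1 + k) * b (n + 1)) := by ring
          _ ≤ (1 + k) ^ n * (b n + k * C * ((1 + k) ^ (n + 1))⁻¹ * (1 + g (n + 1))) := hmul
          _ = (1 + k) ^ n * b n
              + (1 + k) ^ n * (k * C * ((1 + k) ^ (n + 1))⁻¹ * (1 + g (n + 1))) := by ring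
          _ ≤ (1 + k) ^ n * b n + k * C * (1 + g (n + 1)) := by linarith
      push_cast
      linarith
  intro n
  have hCS : k * ∑ m ∈ Finset.Icc 1 n, C * g m ≤ C * S := by
    rcases Nat.eq_zero_or_pos n with h | h
    · subst h; simp; positivity
    · have hs := hsum n h
      have heq : ∑ m ∈ Finset.Icc 1 n, C * g m = C * ∑ m ∈ Finset.Icc 1 n, g m :=
        (Finset.mul_sum _ _ _).symm
      calc k * ∑ m ∈ Finset.Icc 1 n, C * g m
          = C * (k * ∑ m ∈ Finset.Icc 1 n, g m) := by rw [heq]; ring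
        _ ≤ C * S := mul_le_mul_of_nonneg_left hs hC
  rw [← div_eq_mul_inv, le_div_iff₀ (hpow n), mul_comm]
  have := key n
  linarith
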